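/- The plank V is realcompact: there exist an index set ι and a closed embedding of V into ℝ^ι (with the product topology). -/

import Mathlib

open Set Topology

universe u

/-- A topological space is *realcompact* if it admits a closed embedding into a power
of the real line. -/
def Realcompact (X : Type u) [TopologicalSpace X] : Prop :=
  ∃ (ι : Type u) (f : X → ι → ℝ), Topology.IsClosedEmbedding f

/-- `ω₁`, the set of countable ordinals, as a type carrying the discrete topology. -/
def W1 : Type := (Cardinal.aleph 1).ord.ToType

instance : TopologicalSpace W1 := ⊥
instance : DiscreteTopology W1 := ⟨rfl⟩

/-- The Stone–Čech compactification `βω₁` of the discrete space `ω₁`. -/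
abbrev betaW : Type := StoneCech W1

/-- The Stone–Čech remainder `ω₁* = βω₁ \ ω₁`. -/
def W1star : Set betaW := (Set.range (stoneCechUnit : W1 → betaW))ᶜ

/-- The Stone–Čech compactification `βℕ` of the discrete space `ℕ`. -/
abbrev betaN : Type := StoneCech ℕ

/-- The Stone–Čech remainder `ℕ* = βℕ \ ℕ`. -/
def Nstar : Set betaN := (Set.range (stoneCechUnit : ℕ → betaN))ᶜ

/-- The plank `V`: the subspace `(βω₁ × βℕ) \ (ω₁* × ℕ*)` of `βω₁ × βℕ`. -/
abbrev V : Type := {p : betaW × betaN // ¬ (p.1 ∈ W1star ∧ p.2 ∈ Nstar)}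

/-- The right-hand side `R = ω₁* × ℕ` of the plank `V`, as a subset of `V`. -/
def Rside : Set V :=
  {p : V | p.1.1 ∈ W1star ∧ p.1.2 ∈ Set.range (stoneCechUnit : ℕ → betaN)}

/-- The point `(u, n)` of the right-hand side of `V`, for `u ∈ βω₁` and `n ∈ ℕ`. -/
def VmkR (u : betaW) (n : ℕ) : V :=
  ⟨(u, stoneCechUnit n), fun h => h.2 ⟨n, rfl⟩⟩

section
set_option linter.unusedSectionVars false
variable {X : Type*} [TopologicalSpace X] [DiscreteTopology X]

/-- The "ultrafilter" family of a point of βX. -/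
def memU (p : StoneCech X) (A : Set X) : Prop := p ∈ closure (stoneCechUnit '' A)

lemma memU_mono {p : StoneCech X} {A B : Set X} (h : A ⊆ B) (hA : memU p A) : memU p B :=
  closure_mono (Set.image_mono h) hA

lemma not_memU_empty (p : StoneCech X) : ¬ memU p (∅ : Set X) := by
  simp [memU]

lemma disjoint_closure_image {A B : Set X} (h : Disjoint A B) :
    Disjoint (closure (stoneCechUnit '' A)) (closure (stoneCechUnit '' B)) := by
  classical
  set f : X → Bool := fun x => decide (x ∈ A) with hf
  have hfc : Continuous f := continuous_of_discreteTopology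
  set g := stoneCechExtend hfc with hg
  have hext : g ∘ stoneCechUnit = f := stoneCechExtend_extends hfc
  have h1 : closure (stoneCechUnit '' A) ⊆ g ⁻¹' {true} := by
    apply closure_minimal
    · rintro _ ⟨a, ha, rfl⟩
      have : g (stoneCechUnit a) = f a := congrFun hext a
      simp [this, hf, ha]
    · exact (isClosed_singleton).preimage (continuous_stoneCechExtend hfc)
  have h2 : closure (stoneCechUnit '' B) ⊆ g ⁻¹' {false} := by
    apply closure_minimal
    · rintro _ ⟨a, ha, rfl⟩
      have : g (stoneCechUnit a) = f a := congrFun hext a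
      have hna : a ∉ A := fun hA' => h.le_bot ⟨hA', ha⟩
      simp [this, hf, hna]
    · exact (isClosed_singleton).preimage (continuous_stoneCechExtend hfc)
  refine Set.disjoint_of_subset h1 h2 ?_
  simp [Set.disjoint_left]

lemma memU_or_compl (p : StoneCech X) (A : Set X) : memU p A ∨ memU p Aᶜ := by
  have : p ∈ closure (Set.range (stoneCechUnit : X → StoneCech X)) := by
    rw [denseRange_stoneCechUnit.closure_range]; trivial
  rw [← Set.image_univ, ← Set.union_compl_self A, Set.image_union, closure_union] at this
  exact this

lemma memU_compl_not {p : StoneCech X} {A : Set X} (hA : memU p A) : ¬ memU p Aᶜ :=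
  fun h => (disjoint_closure_image (disjoint_compl_right (a := A))).le_bot ⟨hA, h⟩

lemma memU_union {p : StoneCech X} {A B : Set X} (h : memU p (A ∪ B)) :
    memU p A ∨ memU p B := by
  rw [memU, Set.image_union, closure_union] at h
  exact h

lemma memU_inter {p : StoneCech X} {A B : Set X} (hA : memU p A) (hB : memU p B) :
    memU p (A ∩ B) := by
  have hsplit : A = (A ∩ B) ∪ (A ∩ Bᶜ) := by
    ext x; by_cases hx : x ∈ B <;> simp [hx]
  rw [hsplit] at hA
  rcases memU_union hA with h | h
  · exact h
  · exact absurd (memU_mono Set.inter_subset_right h) (memU_compl_not hB)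

lemma not_memU_finite {p : StoneCech X} (hp : p ∉ Set.range (stoneCechUnit : X → StoneCech X))
    {A : Set X} (hA : A.Finite) : ¬ memU p A := by
  refine Set.Finite.induction_on (motive := fun A _ => ¬ memU p A) A hA (not_memU_empty p) ?_
  intro a s _ _ ih h
  rw [← Set.singleton_union] at h
  rcases memU_union h with h1 | h2
  · have heq : closure (stoneCechUnit '' ({a} : Set X)) = {stoneCechUnit a} := by
      rw [Set.image_singleton, closure_singleton]
    rw [memU, heq] at h1
    exact hp ⟨a, h1.symm⟩
  · exact ih h2

lemma memU_cofinite {p : StoneCech X} (hp : p ∉ Set.range (stoneCechUnit : X → StoneCech X))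
    {A : Set X} (hA : Aᶜ.Finite) : memU p A := by
  rcases memU_or_compl p A with h | h
  · exact h
  · exact absurd h (not_memU_finite hp hA)
end
lemma vanish {X : Type*} [TopologicalSpace X] [DiscreteTopology X]
    {φ : X → unitInterval} (hφ : Continuous φ) {p : StoneCech X}
    (h : ∀ ε : ℝ, 0 < ε → memU p {x | (φ x : ℝ) ≤ ε}) :
    stoneCechExtend hφ p = 0 := by
  set g := stoneCechExtend hφ with hg
  have key : ∀ ε : ℝ, 0 < ε → (g p : ℝ) ≤ ε := by
    intro ε hε
    have hclosed : IsClosed {y : StoneCech X | ((g y : ℝ)) ≤ ε} :=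
      isClosed_le (continuous_subtype_val.comp (continuous_stoneCechExtend hφ)) continuous_const
    have hsub : closure (stoneCechUnit '' {x | (φ x : ℝ) ≤ ε}) ⊆ {y | ((g y : ℝ)) ≤ ε} := by
      apply closure_minimal _ hclosed
      rintro _ ⟨a, ha, rfl⟩
      have hEq : g (stoneCechUnit a) = φ a := congrFun (stoneCechExtend_extends hφ) a
      simpa [hEq] using ha
    exact hsub (h ε hε)
  have h0 : (g p : ℝ) ≤ 0 := by
    by_contra hlt
    push_neg at hlt
    have := key _ (half_pos hlt)
    linarith
  exact Subtype.ext (le_antisymm h0 (g p).2.1)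

noncomputable instance : LinearOrder W1 :=
  inferInstanceAs (LinearOrder (Cardinal.aleph 1).ord.ToType)

lemma W1.countable_Iio (β : W1) : (Set.Iio β).Countable :=
  (Cardinal.countable_iff_lt_aleph_one _).2 (Cardinal.mk_Iio_ord_toType β)

lemma W1.uncountable : ¬ Countable W1 := by
  intro h
  have h1 : Cardinal.mk W1 ≤ Cardinal.aleph0 := Cardinal.mk_le_aleph0_iff.mpr h
  have h2 : Cardinal.mk W1 = Cardinal.aleph 1 := by
    have := Cardinal.mk_toType (Cardinal.aleph 1).ord
    rw [Cardinal.card_ord] at this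
    exact this
  rw [h2] at h1
  exact absurd (lt_of_lt_of_le Cardinal.aleph0_lt_aleph_one h1) (lt_irrefl _)

lemma exists_antitone_empty (p : betaW) (hp : p ∉ Set.range (stoneCechUnit : W1 → betaW)) :
    ∃ B : ℕ → Set W1, (∀ n, memU p (B n)) ∧ (∀ n, B (n+1) ⊆ B n) ∧ (⋂ n, B n) = ∅ := by
  classical
  by_contra hcon
  push_neg at hcon
  -- Step 1: decreasing sequences in U have nonempty intersection, hence all sequences do.
  have step : ∀ C : ℕ → Set W1, (∀ n, memU p (C n)) → (⋂ n, C n).Nonempty := by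
    intro C hC
    set B : ℕ → Set W1 := fun n => Nat.rec (C 0) (fun m Bm => Bm ∩ C (m+1)) n with hB
    have hBU : ∀ n, memU p (B n) := by
      intro n
      induction n with
      | zero => exact hC 0
      | succ m ih => exact memU_inter ih (hC (m+1))
    have hBdec : ∀ n, B (n+1) ⊆ B n := fun n => Set.inter_subset_left
    have hBC : ∀ n, B n ⊆ C n := by
      intro n
      cases n with
      | zero => exact subset_rfl
      | succ m => exact Set.inter_subset_right
    have hne := hcon B hBU hBdec
    exact hne.mono (Set.iInter_mono hBC)
  -- Step 2: countable sets are not in U.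
  have hcble : ∀ C : Set W1, C.Countable → ¬ memU p C := by
    intro C hC hmem
    rcases C.eq_empty_or_nonempty with rfl | hne
    · exact not_memU_empty p hmem
    · obtain ⟨f, rfl⟩ := hC.exists_eq_range hne
      set D : ℕ → Set W1 := fun n => Set.range f ∩ (f '' Set.Iio n)ᶜ with hD
      have hDU : ∀ n, memU p (D n) := by
        intro n
        refine memU_inter hmem (memU_cofinite hp ?_)
        simpa using (Set.finite_Iio n).image f
      obtain ⟨x, hx⟩ := step D hDU
      simp only [Set.mem_iInter] at hx
      obtain ⟨i, rfl⟩ := (hx 0).1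
      exact (hx (i+1)).2 ⟨i, by simp, rfl⟩
  -- Step 3: if a countable union is in U, some member is.
  have hUnion : ∀ A : ℕ → Set W1, memU p (⋃ n, A n) → ∃ n, memU p (A n) := by
    intro A hA
    by_contra hnone
    push_neg at hnone
    have hcompl : ∀ n, memU p (A n)ᶜ := fun n =>
      (memU_or_compl p (A n)).resolve_left (hnone n)
    obtain ⟨x, hx⟩ := step (fun n => (⋃ m, A m) ∩ (A n)ᶜ)
      (fun n => memU_inter hA (hcompl n))
    simp only [Set.mem_iInter, Set.mem_inter_iff] at hx
    obtain ⟨m, hm⟩ := Set.mem_iUnion.1 (hx 0).1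
    exact (hx m).2 hm
  -- Step 4: the Ulam matrix argument.
  have hinj : ∀ β : W1, ∃ g : (Set.Iio β) → ℕ, Function.Injective g := by
    intro β
    have : Countable (Set.Iio β) := (W1.countable_Iio β).to_subtype
    exact exists_injective_nat _
  choose e he using hinj
  set A : W1 → ℕ → Set W1 := fun α n => {β | ∃ h : α < β, e β ⟨α, h⟩ = n} with hA
  have hS : ∀ α : W1, ∃ n, memU p (A α n) := by
    intro α
    apply hUnion
    have hSU : {β | α < β} = ⋃ n, A α n := by
      ext β
      simp only [Set.mem_setOf_eq, Set.mem_iUnion, hA]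
      exact ⟨fun h => ⟨e β ⟨α, h⟩, h, rfl⟩, fun ⟨n, h, _⟩ => h⟩
    rw [← hSU]
    rcases memU_or_compl p {β | α < β} with h | h
    · exact h
    · exfalso
      refine hcble _ ?_ h
      have : {β : W1 | α < β}ᶜ ⊆ Set.Iio α ∪ {α} := by
        intro x hx
        simp only [Set.mem_compl_iff, Set.mem_setOf_eq, not_lt] at hx
        rcases lt_or_eq_of_le hx with h1 | h1
        · exact Or.inl h1
        · exact Or.inr (by simp [h1])
      exact Set.Countable.mono this ((W1.countable_Iio α).union (Set.countable_singleton α))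
  choose nf hnf using hS
  have hnotinj : ¬ Function.Injective nf := by
    intro hinj'
    exact W1.uncountable ((countable_iff_exists_injective W1).2 ⟨nf, hinj'⟩)
  rw [Function.not_injective_iff] at hnotinj
  obtain ⟨α, α', heq, hne⟩ := hnotinj
  have hαα' : A α (nf α) ∩ A α' (nf α') = ∅ := by
    ext β
    simp only [Set.mem_inter_iff, Set.mem_empty_iff_false, iff_false, hA, Set.mem_setOf_eq]
    rintro ⟨⟨h1, hv1⟩, ⟨h2, hv2⟩⟩
    apply hne
    have : (⟨α, h1⟩ : Set.Iio β) = ⟨α', h2⟩ := he β (by rw [hv1, hv2, heq])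
    exact congrArg Subtype.val this
  have := memU_inter (hnf α) (hnf α')
  rw [hαα'] at this
  exact not_memU_empty p this

lemma exists_gW (p : betaW) (hp : p ∈ W1star) :
    ∃ g : betaW → ℝ, Continuous g ∧ (∀ x, 0 ≤ g x) ∧ (∀ a : W1, g (stoneCechUnit a) ≠ 0) ∧
      g p = 0 := by
  classical
  obtain ⟨B, hBU, hBdec, hBempty⟩ := exists_antitone_empty p hp
  have hmono : ∀ {i j : ℕ}, i ≤ j → B j ⊆ B i := by
    intro i j hij
    induction j, hij using Nat.le_induction with
    | base => exact subset_rfl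
    | succ m _ ih => exact (hBdec m).trans ih
  have hex : ∀ α : W1, ∃ n, α ∉ B n := by
    intro α
    by_contra hcon
    push_neg at hcon
    have h1 : α ∈ ⋂ n, B n := Set.mem_iInter.2 hcon
    rw [hBempty] at h1
    exact h1
  set k : W1 → ℕ := fun α => Nat.find (hex α) with hk
  have hφmem : ∀ α : W1, (1 : ℝ) / (k α + 1) ∈ unitInterval := by
    intro α
    constructor
    · positivity
    · rw [div_le_one (by positivity)]
      have : (0:ℝ) ≤ (k α : ℝ) := Nat.cast_nonneg _
      linarith
  set φ : W1 → unitInterval := fun α => ⟨1 / (k α + 1), hφmem α⟩ with hφ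
  have hφc : Continuous φ := continuous_of_discreteTopology
  have hvan : stoneCechExtend hφc p = 0 := by
    apply vanish
    intro ε hε
    obtain ⟨m, hm⟩ := exists_nat_one_div_lt hε
    refine memU_mono (B := {x | ((φ x : ℝ)) ≤ ε}) ?_ (hBU m)
    intro α hα
    have hkα : m < k α := by
      by_contra hle
      push_neg at hle
      exact (Nat.find_spec (hex α)) (hmono hle hα)
    show ((φ α : ℝ)) ≤ ε
    have h1 : ((m : ℝ) + 1) ≤ ((k α : ℝ) + 1) := by
      have := (Nat.cast_le (α := ℝ)).2 hkα.le
      linarith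
    have h2 : (1:ℝ) / (k α + 1) ≤ 1 / (m + 1) :=
      one_div_le_one_div_of_le (by positivity) h1
    calc ((φ α : ℝ)) = 1 / (k α + 1) := rfl
      _ ≤ 1 / (m + 1) := h2
      _ ≤ ε := hm.le
  refine ⟨fun y => ((stoneCechExtend hφc y : unitInterval) : ℝ), ?_, ?_, ?_, ?_⟩
  · exact continuous_subtype_val.comp (continuous_stoneCechExtend hφc)
  · exact fun x => (stoneCechExtend hφc x).2.1
  · intro a
    have hEq : stoneCechExtend hφc (stoneCechUnit a) = φ a :=
      congrFun (stoneCechExtend_extends hφc) a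
    show ((stoneCechExtend hφc (stoneCechUnit a) : unitInterval) : ℝ) ≠ 0
    rw [hEq]
    show (1:ℝ) / (k a + 1) ≠ 0
    positivity
  · show ((stoneCechExtend hφc p : unitInterval) : ℝ) = 0
    rw [hvan]
    rfl

lemma exists_hN :
    ∃ h : betaN → ℝ, Continuous h ∧ (∀ x, 0 ≤ h x) ∧ (∀ n : ℕ, h (stoneCechUnit n) ≠ 0) ∧
      ∀ p ∈ Nstar, h p = 0 := by
  have hφmem : ∀ n : ℕ, (1 : ℝ) / (n + 1) ∈ unitInterval := by
    intro n
    constructor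
    · positivity
    · rw [div_le_one (by positivity)]
      have : (0:ℝ) ≤ (n : ℝ) := Nat.cast_nonneg _
      linarith
  set φ : ℕ → unitInterval := fun n => ⟨1 / (n + 1), hφmem n⟩ with hφ
  have hφc : Continuous φ := continuous_of_discreteTopology
  refine ⟨fun y => ((stoneCechExtend hφc y : unitInterval) : ℝ), ?_, ?_, ?_, ?_⟩
  · exact continuous_subtype_val.comp (continuous_stoneCechExtend hφc)
  · exact fun x => (stoneCechExtend hφc x).2.1
  · intro n
    have hEq : stoneCechExtend hφc (stoneCechUnit n) = φ n :=
      congrFun (stoneCechExtend_extends hφc) n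
    show ((stoneCechExtend hφc (stoneCechUnit n) : unitInterval) : ℝ) ≠ 0
    rw [hEq]
    show (1:ℝ) / (n + 1) ≠ 0
    positivity
  · intro p hp
    have hvan : stoneCechExtend hφc p = 0 := by
      apply vanish
      intro ε hε
      apply memU_cofinite hp
      have hsub : {n : ℕ | ((φ n : ℝ)) ≤ ε}ᶜ ⊆ Set.Iio (Nat.ceil (1/ε)) := by
        intro n hn
        simp only [Set.mem_compl_iff, Set.mem_setOf_eq, not_le] at hn
        have hn' : ε < 1 / ((n:ℝ) + 1) := hn
        have hpos : (0:ℝ) < (n:ℝ) + 1 := by positivity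
        have h1 : ε * ((n:ℝ) + 1) < 1 := by
          rw [lt_div_iff₀ hpos] at hn'
          exact hn'
        have h2 : (n : ℝ) < 1/ε := by
          rw [lt_div_iff₀ hε]
          nlinarith
        exact Set.mem_Iio.2 (Nat.lt_ceil.2 h2)
      exact (Set.finite_Iio _).subset hsub
    show ((stoneCechExtend hφc p : unitInterval) : ℝ) = 0
    rw [hvan]
    rfl

/-- The plank `V` is realcompact. -/
theorem statement12 : Realcompact V := by
  classical
  obtain ⟨hN, hNc, hN0, hNunit, hNstar⟩ := exists_hN
  choose gW hgWc hgW0 hgWunit hgWp using fun q : W1star => exists_gW q.1 q.2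
  let D : W1star → C(betaW × betaN, ℝ) := fun q =>
    ⟨fun k => gW q k.1 + hN k.2, ((hgWc q).comp continuous_fst).add (hNc.comp continuous_snd)⟩
  let E : (betaW × betaN) → C(betaW × betaN, ℝ) → ℝ := fun k g => g k
  have hEc : Continuous E := continuous_pi fun g => g.continuous
  have hEinj : Function.Injective E := by
    intro x y hxy
    by_contra hne
    obtain ⟨f, hf0, hf1, -⟩ := exists_continuous_zero_one_of_isClosed
      (isClosed_singleton (x := x)) (isClosed_singleton (x := y))
      (Set.disjoint_singleton.mpr hne)
    have h1 := congrFun hxy f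
    have h2 : f x = 0 := hf0 rfl
    have h3 : f y = 1 := hf1 rfl
    simp only [E] at h1
    rw [h2, h3] at h1
    exact one_ne_zero h1.symm
  have hE : Topology.IsClosedEmbedding E := hEc.isClosedEmbedding hEinj
  -- positivity of the denominators on V
  have hpos : ∀ (x : V) (q : W1star), 0 < D q x.1 := by
    intro x q
    rcases not_and_or.mp x.2 with h1 | h2
    · have h1' : x.1.1 ∈ Set.range (stoneCechUnit : W1 → betaW) := not_not.mp h1
      obtain ⟨a, ha⟩ := h1'
      have hne : gW q x.1.1 ≠ 0 := ha ▸ hgWunit q a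
      have hlt : 0 < gW q x.1.1 := lt_of_le_of_ne (hgW0 q x.1.1) (Ne.symm hne)
      exact add_pos_of_pos_of_nonneg hlt (hN0 _)
    · have h2' : x.1.2 ∈ Set.range (stoneCechUnit : ℕ → betaN) := not_not.mp h2
      obtain ⟨n, hn⟩ := h2'
      have hne : hN x.1.2 ≠ 0 := hn ▸ hNunit n
      have hlt : 0 < hN x.1.2 := lt_of_le_of_ne (hN0 _) (Ne.symm hne)
      exact add_pos_of_nonneg_of_pos (hgW0 q _) hlt
  refine ⟨C(betaW × betaN, ℝ) ⊕ W1star,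
    fun x => Sum.elim (fun g => g x.1) (fun q => (D q x.1)⁻¹), ?_⟩
  set F : V → (C(betaW × betaN, ℝ) ⊕ W1star) → ℝ :=
    fun x => Sum.elim (fun g => g x.1) (fun q => (D q x.1)⁻¹) with hF
  have hFc : Continuous F := by
    apply continuous_pi
    rintro (g | q)
    · exact g.continuous.comp continuous_subtype_val
    · exact (((D q).continuous.comp continuous_subtype_val)).inv₀ fun x => (hpos x q).ne'
  let π : ((C(betaW × betaN, ℝ) ⊕ W1star) → ℝ) → (C(betaW × betaN, ℝ) → ℝ) :=
    fun t g => t (Sum.inl g)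
  have hπc : Continuous π := continuous_pi fun g => continuous_apply _
  have hπF : π ∘ F = E ∘ (Subtype.val : V → betaW × betaN) := rfl
  have hind : Topology.IsInducing F := by
    apply Topology.IsInducing.of_comp hFc hπc
    rw [hπF]
    exact hE.isInducing.comp Topology.IsInducing.subtypeVal
  have hFinj : Function.Injective F := by
    intro x y hxy
    have : E x.1 = E y.1 := funext fun g => congrFun hxy (Sum.inl g)
    exact Subtype.ext (hEinj this)
  have hrange : Set.range F = {t | (fun g => t (Sum.inl g)) ∈ Set.range E ∧
      ∀ q : W1star, t (Sum.inr q) * t (Sum.inl (D q)) = 1} := by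
    ext t
    constructor
    · rintro ⟨x, rfl⟩
      refine ⟨⟨x.1, rfl⟩, fun q => ?_⟩
      show (D q x.1)⁻¹ * D q x.1 = 1
      exact inv_mul_cancel₀ (hpos x q).ne'
    · rintro ⟨⟨k, hk⟩, hq⟩
      have htl : ∀ g : C(betaW × betaN, ℝ), t (Sum.inl g) = g k := fun g => (congrFun hk g).symm
      have hkD : ∀ q : W1star, D q k ≠ 0 := by
        intro q h0
        have := hq q
        rw [htl, h0, mul_zero] at this
        exact zero_ne_one this
      have hmem : ¬(k.1 ∈ W1star ∧ k.2 ∈ Nstar) := by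
        rintro ⟨h1, h2⟩
        apply hkD ⟨k.1, h1⟩
        show gW ⟨k.1, h1⟩ k.1 + hN k.2 = 0
        rw [hgWp ⟨k.1, h1⟩, hNstar k.2 h2, add_zero]
      refine ⟨⟨k, hmem⟩, ?_⟩
      funext i
      cases i with
      | inl g => exact (htl g).symm
      | inr q =>
          have h1 := hq q
          rw [htl] at h1
          show (D q k)⁻¹ = t (Sum.inr q)
          exact (eq_inv_of_mul_eq_one_left h1).symm
  have h1 : IsClosed {t : (C(betaW × betaN, ℝ) ⊕ W1star) → ℝ |
      (fun g => t (Sum.inl g)) ∈ Set.range E} := hE.isClosed_range.preimage hπc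
  have h2 : IsClosed {t : (C(betaW × betaN, ℝ) ⊕ W1star) → ℝ |
      ∀ q : W1star, t (Sum.inr q) * t (Sum.inl (D q)) = 1} := by
    have heq : {t : (C(betaW × betaN, ℝ) ⊕ W1star) → ℝ |
        ∀ q : W1star, t (Sum.inr q) * t (Sum.inl (D q)) = 1} =
        ⋂ q : W1star, {t | t (Sum.inr q) * t (Sum.inl (D q)) = 1} := by
      ext t; simp
    rw [heq]
    exact isClosed_iInter fun q =>
      isClosed_eq ((continuous_apply (Sum.inr q)).mul (continuous_apply (Sum.inl (D q)))) continuous_const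
  have hclosed : IsClosed (Set.range F) := by
    rw [hrange]
    exact h1.inter h2
  exact ⟨⟨hind, hFinj⟩, hclosed⟩
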